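/- Let s = -1 (so θ = π) and φ(z) = (3z² - z)/(3z² - 3z + 1). Then Im φ(x + iy) = -y(6y² + 6(x - 1/2)² - 1/2)/|3z² - 3z + 1|² for z = x+iy, and consequently φ takes a value with positive imaginary part at some point of the upper half-plane. -/

import Mathlib

open Complex

/-- for `φ(z) = (3z² - z)/(3z² - 3z + 1)` (the case `s = -1`),
`Im φ(x+iy) = -y(6y² + 6(x-1/2)² - 1/2)/|3z² - 3z + 1|²`, and consequently `φ`
takes a value with positive imaginary part at some point of the upper half-plane. -/
theorem stmt10 (φ : ℂ → ℂ)
    (hφ : ∀ z : ℂ, φ z = (3 * z ^ 2 - z) / (3 * z ^ 2 - 3 * z + 1)) :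
    (∀ x y : ℝ, 3 * (x + y * Complex.I) ^ 2 - 3 * (x + y * Complex.I) + 1 ≠ 0 →
      (φ (x + y * Complex.I)).im =
        -(y * (6 * y ^ 2 + 6 * (x - 1/2) ^ 2 - 1/2)) /
          (‖3 * (x + y * Complex.I) ^ 2 - 3 * (x + y * Complex.I) + 1‖) ^ 2)
    ∧ ∃ z : ℂ, 0 < z.im ∧ 0 < (φ z).im := by
  have main : ∀ x y : ℝ, 3 * (x + y * Complex.I) ^ 2 - 3 * (x + y * Complex.I) + 1 ≠ 0 →
      (φ (x + y * Complex.I)).im =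
        -(y * (6 * y ^ 2 + 6 * (x - 1/2) ^ 2 - 1/2)) /
          (‖3 * (x + y * Complex.I) ^ 2 - 3 * (x + y * Complex.I) + 1‖) ^ 2 := by
    intro x y h
    have hns : Complex.normSq (3 * (x + y * Complex.I) ^ 2 - 3 * (x + y * Complex.I) + 1) ≠ 0 :=
      fun hc => h (Complex.normSq_eq_zero.mp hc)
    rw [hφ, Complex.div_im, Complex.sq_norm, div_sub_div_same]
    congr 1
    simp only [Complex.add_re, Complex.add_im, Complex.sub_re,
      Complex.sub_im, Complex.mul_re, Complex.mul_im, Complex.ofReal_re, Complex.ofReal_im,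
      Complex.I_re, Complex.I_im, Complex.one_re, Complex.one_im, pow_two,
      Complex.re_ofNat, Complex.im_ofNat]
    ring
  refine ⟨main, ⟨(1/2 : ℝ) + (1/10 : ℝ) * Complex.I, by simp, ?_⟩⟩
  have h0 : 3 * (((1/2 : ℝ) : ℂ) + (1/10 : ℝ) * Complex.I) ^ 2
      - 3 * (((1/2 : ℝ) : ℂ) + (1/10 : ℝ) * Complex.I) + 1 ≠ 0 := by
    intro hc
    have := congrArg Complex.re hc
    simp [Complex.add_re, Complex.sub_re, Complex.mul_re, Complex.mul_im, pow_two] at this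
    norm_num at this
  have := main (1/2) (1/10) h0
  rw [this]
  have habs : (0:ℝ) < ‖3 * (((1/2:ℝ):ℂ) + (1/10:ℝ) * Complex.I) ^ 2
      - 3 * (((1/2:ℝ):ℂ) + (1/10:ℝ) * Complex.I) + 1‖ := by
    exact norm_pos_iff.mpr h0
  have : (0:ℝ) < -((1/10 : ℝ) * (6 * (1/10:ℝ) ^ 2 + 6 * ((1/2:ℝ) - 1/2) ^ 2 - 1/2)) := by
    norm_num
  positivity
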